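/- The minimum possible codebook size of a valid functional index code for a functional index coding problem F(X,R) equals the chromatic number χ(C(F)) of its confusion graph: every valid functional index code has at least χ(C(F)) distinct codewords, and there exists a valid functional index code with exactly χ(C(F)) codewords. -/
import Mathlib

open Classical in
lemma stmt_3_aux {V B : Type} [Fintype V] {G : SimpleGraph V} (f : V → B)
    (hf : ∀ ⦃x y⦄, G.Adj x y → f x ≠ f y) :
    G.chromaticNumber ≤ ((Set.range f).ncard : ℕ∞) := by
  haveI : Fintype (Set.range f) := (Set.finite_range f).fintype
  have C : G.Coloring (Set.range f) :=
    SimpleGraph.Coloring.mk (fun v => ⟨f v, Set.mem_range_self v⟩)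
      (fun h => by simpa [Subtype.ext_iff] using hf h)
  have h1 := C.colorable.chromaticNumber_le
  have h2 : (Set.range f).ncard = Fintype.card (Set.range f) := by
    rw [← Nat.card_coe_set_eq, Nat.card_eq_fintype_card]
  rw [h2]
  exact_mod_cast h1

/-- The minimum possible codebook size of a valid functional index code equals the chromatic
number of the confusion graph. -/
theorem stmt_3 {F : Type} [Field F] [Fintype F]
    (n K N : ℕ) (hsz wsz : Fin N → ℕ)
    (H : ∀ i, Fin (hsz i) → (Fin (n * K) → F) → Fin n → F)
    (W : ∀ i, Fin (wsz i) → (Fin (n * K) → F) → Fin n → F)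
    (G : SimpleGraph (Fin (n * K) → F))
    (hG : ∀ x x', G.Adj x x' ↔
      x ≠ x' ∧ ∃ i, (∀ j, H i j x = H i j x') ∧ ∃ l, W i l x ≠ W i l x') :
    (∀ (B : Type) (M : (Fin (n * K) → F) → B)
        (D : ∀ i, B → (Fin (hsz i) → Fin n → F) → Fin (wsz i) → Fin n → F),
        (∀ i x, D i (M x) (fun j => H i j x) = fun l => W i l x) →
        G.chromaticNumber ≤ ((Set.range M).ncard : ℕ∞))
    ∧ ∃ (B : Type) (M : (Fin (n * K) → F) → B)
        (D : ∀ i, B → (Fin (hsz i) → Fin n → F) → Fin (wsz i) → Fin n → F),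
        (∀ i x, D i (M x) (fun j => H i j x) = fun l => W i l x) ∧
        ((Set.range M).ncard : ℕ∞) = G.chromaticNumber := by
  classical
  constructor
  · intro B M D hD
    refine stmt_3_aux M ?_
    intro x y hxy hMx
    obtain ⟨hne, i, hH, l, hW⟩ := (hG x y).1 hxy
    have hh : (fun j => H i j x) = (fun j => H i j y) := funext hH
    have : (fun l => W i l x) = (fun l => W i l y) := by
      rw [← hD i x, ← hD i y, hMx, hh]
    exact hW (congrFun this l)
  · -- existence of an optimal code
    have hcol0 : G.Colorable (Fintype.card (Fin (n * K) → F)) := G.colorable_of_fintype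
    set m := G.chromaticNumber.toNat with hm
    have hc : G.Colorable m := SimpleGraph.colorable_chromaticNumber hcol0
    have hχ : G.chromaticNumber = (m : ℕ∞) := by
      have : G.chromaticNumber ≠ ⊤ :=
        SimpleGraph.chromaticNumber_ne_top_iff_exists.2 ⟨_, hcol0⟩
      exact (ENat.coe_toNat this).symm
    obtain ⟨C⟩ := hc
    set M : (Fin (n * K) → F) → Fin m := fun x => C x with hMdef
    have hvalid : ∀ ⦃x y⦄, G.Adj x y → M x ≠ M y := fun _ _ h => C.valid h
    refine ⟨Fin m, M, fun i b h =>
      if h' : ∃ x, M x = b ∧ ∀ j, H i j x = h j then fun l => W i l h'.choose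
      else fun _ _ => 0, ?_, ?_⟩
    · intro i x
      have hex : ∃ y, M y = M x ∧ ∀ j, H i j y = H i j x := ⟨x, rfl, fun _ => rfl⟩
      simp only [dif_pos hex]
      obtain ⟨hMy, hHy⟩ := hex.choose_spec
      set y := hex.choose
      funext l
      by_contra hne
      have hxy : x ≠ y := fun h => hne (by rw [h])
      have hadj : G.Adj y x := (hG y x).2 ⟨fun h => hxy h.symm, i, hHy, l, hne⟩
      exact hvalid hadj hMy
    · -- ncard (range M) = m
      have hle : (Set.range M).ncard ≤ m := by
        have := Set.ncard_le_ncard (Set.subset_univ (Set.range M)) Set.finite_univ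
        simpa [Set.ncard_univ] using this
      have hge : (m : ℕ∞) ≤ ((Set.range M).ncard : ℕ∞) := by
        rw [← hχ]; exact stmt_3_aux M hvalid
      have hge' : m ≤ (Set.range M).ncard := by exact_mod_cast hge
      have : (Set.range M).ncard = m := le_antisymm hle hge'
      rw [this, hχ]
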